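/- Let f, g : [0,1] → [0,1] be increasing Möbius transformations, neither of which is onto. If the orbit of some x₀ ∈ (0,1) under the semigroup generated by f and g is dense in [0,1], then Im(f) ∪ Im(g) = [0,1] and {o(f), o(g)} = {0,1}, where o(h) denotes the attracting fixed point of h. -/

import Mathlib

/-- `f` is a Möbius (fractional linear) map on `[0,1]`. -/
def IsMobiusOn (f : ℝ → ℝ) : Prop :=
  ∃ A B C D : ℝ, A * D - B * C ≠ 0 ∧
    ∀ x ∈ Set.Icc (0:ℝ) 1, C * x + D ≠ 0 ∧ f x = (A * x + B) / (C * x + D)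

/-- `θ` is an attracting fixed point of `f` in `[0,1]`. -/
def IsAttractingFixedPt (f : ℝ → ℝ) (θ : ℝ) : Prop :=
  θ ∈ Set.Icc (0:ℝ) 1 ∧ f θ = θ ∧ ∃ ε > 0, ∀ x ∈ Set.Icc (0:ℝ) 1, |x - θ| < ε →
    Filter.Tendsto (fun n => f^[n] x) Filter.atTop (nhds θ)

open Set Filter

section Helpers

lemma mobius_contOn {f : ℝ → ℝ} (hf : IsMobiusOn f) : ContinuousOn f (Icc 0 1) := by
  obtain ⟨A, B, C, D, _, h⟩ := hf
  have : ContinuousOn (fun x => (A * x + B) / (C * x + D)) (Icc 0 1) := by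
    apply ContinuousOn.div
    · fun_prop
    · fun_prop
    · intro x hx; exact (h x hx).1
  exact this.congr (fun x hx => (h x hx).2)

lemma mobius_conj {g : ℝ → ℝ} (hg : IsMobiusOn g) :
    IsMobiusOn (fun y => 1 - g (1 - y)) := by
  obtain ⟨A, B, C, D, hdet, h⟩ := hg
  refine ⟨A - C, C + D - A - B, -C, C + D, ?_, ?_⟩
  · have : (A - C) * (C + D) - (C + D - A - B) * (-C) = A * D - B * C := by ring
    rw [this]; exact hdet
  · intro x hx
    have hx' : 1 - x ∈ Icc (0:ℝ) 1 := ⟨by linarith [hx.2], by linarith [hx.1]⟩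
    obtain ⟨hd, hv⟩ := h (1 - x) hx'
    have heq : -C * x + (C + D) = C * (1 - x) + D := by ring
    refine ⟨by rw [heq]; exact hd, ?_⟩
    show 1 - g (1 - x) = ((A - C) * x + (C + D - A - B)) / (-C * x + (C + D))
    rw [hv, heq]
    rw [one_sub_div hd]
    ring

lemma iterate_conj (g : ℝ → ℝ) (n : ℕ) :
    ∀ y : ℝ, (fun z => 1 - g (1 - z))^[n] (1 - y) = 1 - g^[n] y := by
  induction n with
  | zero => intro y; simp
  | succ n ih =>
    intro y
    rw [Function.iterate_succ_apply', Function.iterate_succ_apply', ih y]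
    norm_num

lemma mobius_ge {f : ℝ → ℝ} (hf : IsMobiusOn f)
    (hf0 : f 0 = 0) (hf1 : f 1 < 1) {a : ℝ} (ha : a ∈ Ioc (0:ℝ) 1) (hfa : a ≤ f a) :
    ∀ x ∈ Ioc (0:ℝ) a, x ≤ f x := by
  obtain ⟨A, B, C, D, hdet, h⟩ := hf
  have hD : D ≠ 0 := by
    have := (h 0 (by norm_num)).1; simpa using this
  have hDpos : ∀ x ∈ Icc (0:ℝ) 1, 0 < D * (C * x + D) := by
    intro x hx
    by_contra hcon
    push_neg at hcon
    have hc : ContinuousOn (fun t => D * (C * t + D)) (Icc 0 x) := by fun_prop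
    have h0 : 0 < D * (C * 0 + D) := by simpa using mul_self_pos.mpr hD
    have hmem : (0:ℝ) ∈ Icc (D * (C * x + D)) (D * (C * 0 + D)) := ⟨hcon, h0.le⟩
    obtain ⟨r, hr, hr0⟩ := intermediate_value_Icc' hx.1 hc hmem
    have hrI : r ∈ Icc (0:ℝ) 1 := ⟨hr.1, hr.2.trans hx.2⟩
    have := (h r hrI).1
    rcases mul_eq_zero.mp hr0 with h' | h'
    · exact hD h'
    · exact this h'
  have hB : B = 0 := by
    have h0 := (h 0 (by norm_num)).2
    rw [hf0] at h0
    rw [mul_zero, mul_zero, zero_add, zero_add, eq_comm, div_eq_zero_iff] at h0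
    exact h0.resolve_right hD
  have hiff : ∀ x ∈ Icc (0:ℝ) 1, 0 < x → (x ≤ f x ↔ 0 ≤ D * (A - D - C * x)) := by
    intro x hx hxpos
    have hd := (h x hx).1
    have hfx := (h x hx).2
    have hp := hDpos x hx
    have key : (f x - x) * (D * (C * x + D)) = x * (D * (A - D - C * x)) := by
      rw [hfx, hB]; linear_combination D * div_mul_cancel₀ (A * x + 0) hd
    constructor
    · intro hle
      have h1 : 0 ≤ (f x - x) * (D * (C * x + D)) := mul_nonneg (by linarith) hp.le
      rw [key] at h1
      nlinarith
    · intro hle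
      nlinarith [mul_nonneg hxpos.le hle]
  have L1 : D * (A - D - C * 1) < 0 := by
    by_contra hcon
    push_neg at hcon
    have := (hiff 1 (by norm_num) one_pos).mpr hcon
    linarith
  have La : 0 ≤ D * (A - D - C * a) := (hiff a ⟨ha.1.le, ha.2⟩ ha.1).mp hfa
  intro x hx
  have hxI : x ∈ Icc (0:ℝ) 1 := ⟨hx.1.le, hx.2.trans ha.2⟩
  apply (hiff x hxI hx.1).mpr
  rcases le_or_gt 0 (D * C) with hDC | hDC
  · nlinarith [mul_le_mul_of_nonneg_left hx.2 hDC]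
  · nlinarith [mul_le_mul_of_nonpos_left ha.2 hDC.le]

lemma orbit_mem_Icc (f g : ℝ → ℝ) (x₀ : ℝ)
    (hfmaps : Set.MapsTo f (Set.Icc 0 1) (Set.Icc 0 1))
    (hgmaps : Set.MapsTo g (Set.Icc 0 1) (Set.Icc 0 1)) (hx₀ : x₀ ∈ Icc (0:ℝ) 1) :
    ∀ w : List Bool, w.foldr (fun s z => if s then f z else g z) x₀ ∈ Icc (0:ℝ) 1 := by
  intro w
  induction w with
  | nil => exact hx₀
  | cons s t ih =>
    simp only [List.foldr_cons]
    cases s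
    · simpa using hgmaps ih
    · simpa using hfmaps ih

lemma foldr_swap (f g : ℝ → ℝ) (x₀ : ℝ) : ∀ w : List Bool,
    w.foldr (fun s z => if s then g z else f z) x₀ =
      (w.map not).foldr (fun s z => if s then f z else g z) x₀ := by
  intro w
  induction w with
  | nil => rfl
  | cons s t ih =>
    simp only [List.map_cons, List.foldr_cons, ih]
    cases s <;> simp

lemma foldr_conj (f g : ℝ → ℝ) (x₀ : ℝ) : ∀ w : List Bool,
    w.foldr (fun s z => if s then (fun y => 1 - g (1 - y)) z
      else (fun y => 1 - f (1 - y)) z) (1 - x₀) =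
      1 - (w.map not).foldr (fun s z => if s then f z else g z) x₀ := by
  intro w
  induction w with
  | nil => rfl
  | cons s t ih =>
    simp only [List.map_cons, List.foldr_cons, ih]
    cases s <;> simp

lemma lemC {f g : ℝ → ℝ} (hfM : IsMobiusOn f)
    (hfmaps : Set.MapsTo f (Set.Icc 0 1) (Set.Icc 0 1))
    (hgmaps : Set.MapsTo g (Set.Icc 0 1) (Set.Icc 0 1))
    (hfmono : StrictMonoOn f (Set.Icc 0 1)) (hgmono : StrictMonoOn g (Set.Icc 0 1))
    (hf0 : f 0 = 0) (hf1 : f 1 < 1) (hg0 : 0 < g 0)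
    {x₀ : ℝ} (hx₀ : x₀ ∈ Ioo (0:ℝ) 1)
    (hlow : ∀ c > (0:ℝ), ∃ w : List Bool, w ≠ [] ∧
      w.foldr (fun s z => if s then f z else g z) x₀ < c) :
    ∀ x ∈ Ioc (0:ℝ) 1, f x < x := by
  by_contra hcon
  push_neg at hcon
  obtain ⟨a, ha, hfa⟩ := hcon
  have hge := mobius_ge hfM hf0 hf1 ha hfa
  set c := min x₀ (min (g 0) a) with hc
  have hcpos : 0 < c := lt_min hx₀.1 (lt_min hg0 ha.1)
  have hx₀I : x₀ ∈ Icc (0:ℝ) 1 := ⟨hx₀.1.le, hx₀.2.le⟩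
  have key : ∀ w : List Bool,
      w.foldr (fun s z => if s then f z else g z) x₀ ∈ Icc (0:ℝ) 1 ∧
      c ≤ w.foldr (fun s z => if s then f z else g z) x₀ := by
    intro w
    induction w with
    | nil => exact ⟨hx₀I, min_le_left _ _⟩
    | cons s t ih =>
      obtain ⟨hzI, hzc⟩ := ih
      set z := t.foldr (fun s z => if s then f z else g z) x₀ with hz
      cases s
      · refine ⟨by simpa using hgmaps hzI, ?_⟩
        simp only [List.foldr_cons, Bool.false_eq_true, if_false]
        have : g 0 ≤ g z := (hgmono.monotoneOn) ⟨le_rfl, zero_le_one⟩ hzI hzI.1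
        calc c ≤ g 0 := (min_le_right _ _).trans (min_le_left _ _)
          _ ≤ g z := this
      · refine ⟨by simpa using hfmaps hzI, ?_⟩
        simp only [List.foldr_cons, if_true]
        rcases le_or_gt z a with hza | hza
        · have : z ≤ f z := hge z ⟨hcpos.trans_le hzc, hza⟩
          linarith
        · have h1 : f a ≤ f z := (hfmono.monotoneOn) ⟨ha.1.le, ha.2⟩ hzI hza.le
          have h2 : c ≤ a := (min_le_right _ _).trans (min_le_right _ _)
          linarith
  obtain ⟨w, -, hw⟩ := hlow c hcpos
  exact absurd ((key w).2) (not_le.mpr hw)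

lemma lemD {f : ℝ → ℝ} (hfM : IsMobiusOn f)
    (hfmaps : Set.MapsTo f (Set.Icc 0 1) (Set.Icc 0 1))
    (hf0 : f 0 = 0) (hlt : ∀ x ∈ Ioc (0:ℝ) 1, f x < x) :
    IsAttractingFixedPt f 0 := by
  refine ⟨⟨le_rfl, zero_le_one⟩, hf0, 2, by norm_num, ?_⟩
  intro x hx _
  have hmem : ∀ n, f^[n] x ∈ Icc (0:ℝ) 1 := by
    intro n
    induction n with
    | zero => simpa using hx
    | succ n ih => rw [Function.iterate_succ_apply']; exact hfmaps ih
  have hanti : Antitone (fun n => f^[n] x) := by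
    apply antitone_nat_of_succ_le
    intro n
    rw [Function.iterate_succ_apply']
    rcases eq_or_lt_of_le (hmem n).1 with h | h
    · rw [← h, hf0]
    · exact (hlt _ ⟨h, (hmem n).2⟩).le
  have hbdd : BddBelow (Set.range fun n => f^[n] x) :=
    ⟨0, by rintro y ⟨n, rfl⟩; exact (hmem n).1⟩
  have htend := tendsto_atTop_ciInf hanti hbdd
  set L := ⨅ n, f^[n] x with hL
  have hL0 : 0 ≤ L := le_ciInf fun n => (hmem n).1
  have hL1 : L ≤ 1 := (ciInf_le hbdd 0).trans (by simpa using (hmem 0).2)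
  have hfL : f L = L := by
    have hcw : ContinuousWithinAt f (Icc 0 1) L :=
      (mobius_contOn hfM) L ⟨hL0, hL1⟩
    have h1 : Tendsto (fun n => f^[n] x) atTop (nhdsWithin L (Icc 0 1)) :=
      tendsto_nhdsWithin_iff.mpr ⟨htend, Filter.Eventually.of_forall hmem⟩
    have h2 : Tendsto (fun n => f (f^[n] x)) atTop (nhds (f L)) := hcw.tendsto.comp h1
    have h3 : Tendsto (fun n => f^[n+1] x) atTop (nhds L) :=
      (tendsto_add_atTop_iff_nat 1).mpr htend
    have : (fun n => f (f^[n] x)) = fun n => f^[n+1] x := by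
      funext n; rw [Function.iterate_succ_apply']
    rw [this] at h2
    exact tendsto_nhds_unique h2 h3
  have hLz : L = 0 := by
    rcases eq_or_lt_of_le hL0 with h | h
    · exact h.symm
    · exact absurd hfL (ne_of_lt (hlt L ⟨h, hL1⟩))
  rwa [hLz] at htend

lemma fix0 {h : ℝ → ℝ} (hmono : StrictMonoOn h (Set.Icc 0 1))
    (hmaps : Set.MapsTo h (Set.Icc 0 1) (Set.Icc 0 1))
    (h0 : (0:ℝ) ∈ h '' Set.Icc 0 1) : h 0 = 0 := by
  obtain ⟨z, hz, hz0⟩ := h0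
  have h1 : h 0 ≤ h z := (hmono.monotoneOn) ⟨le_rfl, zero_le_one⟩ hz hz.1
  have h2 : 0 ≤ h 0 := (hmaps ⟨le_rfl, zero_le_one⟩).1
  rw [hz0] at h1
  linarith

lemma fix1 {h : ℝ → ℝ} (hmono : StrictMonoOn h (Set.Icc 0 1))
    (hmaps : Set.MapsTo h (Set.Icc 0 1) (Set.Icc 0 1))
    (h1 : (1:ℝ) ∈ h '' Set.Icc 0 1) : h 1 = 1 := by
  obtain ⟨z, hz, hz1⟩ := h1
  have h1' : h z ≤ h 1 := (hmono.monotoneOn) hz ⟨zero_le_one, le_rfl⟩ hz.2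
  have h2 : h 1 ≤ 1 := (hmaps ⟨zero_le_one, le_rfl⟩).2
  rw [hz1] at h1'
  linarith

lemma onto_of_fix {h : ℝ → ℝ} (hcont : ContinuousOn h (Set.Icc 0 1))
    (hmaps : Set.MapsTo h (Set.Icc 0 1) (Set.Icc 0 1))
    (h0 : h 0 = 0) (h1 : h 1 = 1) : h '' Set.Icc 0 1 = Set.Icc 0 1 := by
  apply Subset.antisymm hmaps.image_subset
  have := intermediate_value_Icc (zero_le_one (α := ℝ)) hcont
  rwa [h0, h1] at this

/-- Master lemma: in the oriented situation, `0` attracts for `f` and `1` for `g`. -/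
lemma master {f g : ℝ → ℝ} (hfM : IsMobiusOn f) (hgM : IsMobiusOn g)
    (hfmaps : Set.MapsTo f (Set.Icc 0 1) (Set.Icc 0 1))
    (hgmaps : Set.MapsTo g (Set.Icc 0 1) (Set.Icc 0 1))
    (hfmono : StrictMonoOn f (Set.Icc 0 1)) (hgmono : StrictMonoOn g (Set.Icc 0 1))
    (hf0 : f 0 = 0) (hf1 : f 1 < 1) (hg1 : g 1 = 1) (hg0 : 0 < g 0)
    {x₀ : ℝ} (hx₀ : x₀ ∈ Ioo (0:ℝ) 1)
    (hnear : ∀ t ∈ Icc (0:ℝ) 1, ∀ c > (0:ℝ), ∃ w : List Bool, w ≠ [] ∧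
      |w.foldr (fun s z => if s then f z else g z) x₀ - t| < c) :
    IsAttractingFixedPt f 0 ∧ IsAttractingFixedPt g 1 := by
  have hlow : ∀ c > (0:ℝ), ∃ w : List Bool, w ≠ [] ∧
      w.foldr (fun s z => if s then f z else g z) x₀ < c := by
    intro c hcpos
    obtain ⟨w, hw, hwc⟩ := hnear 0 ⟨le_rfl, zero_le_one⟩ c hcpos
    refine ⟨w, hw, ?_⟩
    rw [sub_zero] at hwc
    calc w.foldr _ x₀ ≤ |w.foldr (fun s z => if s then f z else g z) x₀| := le_abs_self _
      _ < c := hwc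
  have hflt := lemC hfM hfmaps hgmaps hfmono hgmono hf0 hf1 hg0 hx₀ hlow
  have hAf := lemD hfM hfmaps hf0 hflt
  -- conjugated system
  set G := fun y => 1 - g (1 - y) with hGdef
  set F := fun y => 1 - f (1 - y) with hFdef
  have hGM : IsMobiusOn G := mobius_conj hgM
  have hGmaps : Set.MapsTo G (Set.Icc 0 1) (Set.Icc 0 1) := by
    intro x hx
    have := hgmaps (⟨by linarith [hx.2], by linarith [hx.1]⟩ : (1 - x) ∈ Icc (0:ℝ) 1)
    exact ⟨by simp only [hGdef]; linarith [this.2], by simp only [hGdef]; linarith [this.1]⟩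
  have hFmaps : Set.MapsTo F (Set.Icc 0 1) (Set.Icc 0 1) := by
    intro x hx
    have := hfmaps (⟨by linarith [hx.2], by linarith [hx.1]⟩ : (1 - x) ∈ Icc (0:ℝ) 1)
    exact ⟨by simp only [hFdef]; linarith [this.2], by simp only [hFdef]; linarith [this.1]⟩
  have hGmono : StrictMonoOn G (Set.Icc 0 1) := by
    intro x hx y hy hxy
    have hx' : 1 - x ∈ Icc (0:ℝ) 1 := ⟨by linarith [hx.2], by linarith [hx.1]⟩
    have hy' : 1 - y ∈ Icc (0:ℝ) 1 := ⟨by linarith [hy.2], by linarith [hy.1]⟩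
    have := hgmono hy' hx' (by linarith)
    simp only [hGdef]
    linarith
  have hFmono : StrictMonoOn F (Set.Icc 0 1) := by
    intro x hx y hy hxy
    have hx' : 1 - x ∈ Icc (0:ℝ) 1 := ⟨by linarith [hx.2], by linarith [hx.1]⟩
    have hy' : 1 - y ∈ Icc (0:ℝ) 1 := ⟨by linarith [hy.2], by linarith [hy.1]⟩
    have := hfmono hy' hx' (by linarith)
    simp only [hFdef]
    linarith
  have hG0 : G 0 = 0 := by simp [hGdef, hg1]
  have hG1 : G 1 < 1 := by
    have : G 1 = 1 - g 0 := by simp [hGdef]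
    rw [this]; linarith
  have hF0 : 0 < F 0 := by
    have : F 0 = 1 - f 1 := by simp [hFdef]
    rw [this]; linarith
  have hx₀' : (1 - x₀) ∈ Ioo (0:ℝ) 1 := ⟨by linarith [hx₀.2], by linarith [hx₀.1]⟩
  have hlow' : ∀ c > (0:ℝ), ∃ w : List Bool, w ≠ [] ∧
      w.foldr (fun s z => if s then G z else F z) (1 - x₀) < c := by
    intro c hcpos
    obtain ⟨w, hw, hwc⟩ := hnear 1 ⟨zero_le_one, le_rfl⟩ c hcpos
    refine ⟨w.map not, by simpa using hw, ?_⟩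
    have := foldr_conj f g x₀ (w.map not)
    simp only [hGdef, hFdef] at this ⊢
    rw [this]
    have hmm : (w.map not).map not = w := by
      simp [List.map_map, Function.comp_def]
    rw [hmm]
    have := abs_lt.mp hwc
    linarith [this.1]
  have hGlt := lemC hGM hGmaps hFmaps hGmono hFmono hG0 hG1 hF0 hx₀' hlow'
  have hAG := lemD hGM hGmaps hG0 hGlt
  refine ⟨hAf, ?_⟩
  obtain ⟨-, -, ε, hε, hAGt⟩ := hAG
  refine ⟨⟨zero_le_one, le_rfl⟩, hg1, ε, hε, ?_⟩
  intro x hx hxd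
  have hx' : 1 - x ∈ Icc (0:ℝ) 1 := ⟨by linarith [hx.2], by linarith [hx.1]⟩
  have hxd' : |1 - x - 0| < ε := by
    rw [sub_zero]
    rw [abs_sub_comm] at hxd
    simpa using hxd
  have hT := hAGt (1 - x) hx' hxd'
  have hiter : ∀ n, G^[n] (1 - x) = 1 - g^[n] x := fun n => iterate_conj g n x
  have hT2 : Tendsto (fun n => 1 - g^[n] x) atTop (nhds 0) := by
    have : (fun n => G^[n] (1 - x)) = fun n => 1 - g^[n] x := funext hiter
    rwa [this] at hT
  have hT3 := hT2.const_sub 1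
  simp only [sub_sub_cancel, sub_zero] at hT3
  exact hT3

end Helpers

/-- if a semigroup orbit of two non-onto increasing Möbius self-maps of
[0,1] is dense, then the images cover [0,1] and the attracting fixed points are
{0,1}. -/
theorem stmt_8 (f g : ℝ → ℝ)
    (hfM : IsMobiusOn f) (hgM : IsMobiusOn g)
    (hfmaps : Set.MapsTo f (Set.Icc 0 1) (Set.Icc 0 1))
    (hgmaps : Set.MapsTo g (Set.Icc 0 1) (Set.Icc 0 1))
    (hfmono : StrictMonoOn f (Set.Icc 0 1)) (hgmono : StrictMonoOn g (Set.Icc 0 1))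
    (hfnotonto : f '' Set.Icc 0 1 ≠ Set.Icc 0 1)
    (hgnotonto : g '' Set.Icc 0 1 ≠ Set.Icc 0 1)
    (x₀ : ℝ) (hx₀ : x₀ ∈ Set.Ioo (0:ℝ) 1)
    (hdense : Set.Icc (0:ℝ) 1 ⊆ closure {y | ∃ w : List Bool, w ≠ [] ∧
        y = w.foldr (fun s z => if s then f z else g z) x₀}) :
    (f '' Set.Icc 0 1) ∪ (g '' Set.Icc 0 1) = Set.Icc 0 1 ∧
    ∃ θf θg : ℝ, IsAttractingFixedPt f θf ∧ IsAttractingFixedPt g θg ∧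
      ({θf, θg} : Set ℝ) = {0, 1} := by
  have hx₀I : x₀ ∈ Icc (0:ℝ) 1 := ⟨hx₀.1.le, hx₀.2.le⟩
  have horbIcc := orbit_mem_Icc f g x₀ hfmaps hgmaps hx₀I
  have hcf := mobius_contOn hfM
  have hcg := mobius_contOn hgM
  have himfC : IsClosed (f '' Icc 0 1) := (isCompact_Icc.image_of_continuousOn hcf).isClosed
  have himgC : IsClosed (g '' Icc 0 1) := (isCompact_Icc.image_of_continuousOn hcg).isClosed
  have hsub : {y | ∃ w : List Bool, w ≠ [] ∧
      y = w.foldr (fun s z => if s then f z else g z) x₀} ⊆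
      f '' Icc 0 1 ∪ g '' Icc 0 1 := by
    rintro y ⟨w, hw, rfl⟩
    obtain ⟨s, t, rfl⟩ := List.exists_cons_of_ne_nil hw
    cases s
    · right
      exact ⟨_, horbIcc t, by simp⟩
    · left
      exact ⟨_, horbIcc t, by simp⟩
  have hpart1 : f '' Icc 0 1 ∪ g '' Icc 0 1 = Icc 0 1 := by
    apply Subset.antisymm (union_subset hfmaps.image_subset hgmaps.image_subset)
    intro y hy
    exact closure_minimal hsub (himfC.union himgC) (hdense hy)
  refine ⟨hpart1, ?_⟩
  -- density in metric form
  have hnear : ∀ t ∈ Icc (0:ℝ) 1, ∀ c > (0:ℝ), ∃ w : List Bool, w ≠ [] ∧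
      |w.foldr (fun s z => if s then f z else g z) x₀ - t| < c := by
    intro t ht c hcpos
    have := hdense ht
    rw [Metric.mem_closure_iff] at this
    obtain ⟨y, ⟨w, hw, rfl⟩, hd⟩ := this c hcpos
    refine ⟨w, hw, ?_⟩
    rw [Real.dist_eq, abs_sub_comm] at hd
    exact hd
  have hnear' : ∀ t ∈ Icc (0:ℝ) 1, ∀ c > (0:ℝ), ∃ w : List Bool, w ≠ [] ∧
      |w.foldr (fun s z => if s then g z else f z) x₀ - t| < c := by
    intro t ht c hcpos
    obtain ⟨w, hw, hwc⟩ := hnear t ht c hcpos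
    refine ⟨w.map not, by simpa using hw, ?_⟩
    rw [foldr_swap f g x₀ (w.map not)]
    have hmm : (w.map not).map not = w := by
      simp [List.map_map, Function.comp_def]
    rwa [hmm]
  have h0mem : (0:ℝ) ∈ f '' Icc 0 1 ∪ g '' Icc 0 1 := by
    rw [hpart1]; exact ⟨le_rfl, zero_le_one⟩
  have h1mem : (1:ℝ) ∈ f '' Icc 0 1 ∪ g '' Icc 0 1 := by
    rw [hpart1]; exact ⟨zero_le_one, le_rfl⟩
  rcases h0mem with h0f | h0g
  · -- f fixes 0
    have hf0 : f 0 = 0 := fix0 hfmono hfmaps h0f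
    have h1nf : (1:ℝ) ∉ f '' Icc 0 1 := by
      intro h1f
      exact hfnotonto (onto_of_fix hcf hfmaps hf0 (fix1 hfmono hfmaps h1f))
    have h1g : (1:ℝ) ∈ g '' Icc 0 1 := h1mem.resolve_left h1nf
    have hg1 : g 1 = 1 := fix1 hgmono hgmaps h1g
    have hg0 : 0 < g 0 := by
      rcases lt_or_eq_of_le (hgmaps ⟨le_rfl, zero_le_one⟩).1 with h | h
      · exact h
      · exact absurd (onto_of_fix hcg hgmaps h.symm hg1) hgnotonto
    have hf1 : f 1 < 1 := by
      rcases lt_or_eq_of_le (hfmaps ⟨zero_le_one, le_rfl⟩).2 with h | h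
      · exact h
      · exact absurd (onto_of_fix hcf hfmaps hf0 h) hfnotonto
    obtain ⟨hAf, hAg⟩ := master hfM hgM hfmaps hgmaps hfmono hgmono hf0 hf1 hg1 hg0 hx₀ hnear
    exact ⟨0, 1, hAf, hAg, rfl⟩
  · -- g fixes 0
    have hg0 : g 0 = 0 := fix0 hgmono hgmaps h0g
    have h1ng : (1:ℝ) ∉ g '' Icc 0 1 := by
      intro h1g
      exact hgnotonto (onto_of_fix hcg hgmaps hg0 (fix1 hgmono hgmaps h1g))
    have h1f : (1:ℝ) ∈ f '' Icc 0 1 := h1mem.resolve_right h1ng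
    have hf1 : f 1 = 1 := fix1 hfmono hfmaps h1f
    have hf0 : 0 < f 0 := by
      rcases lt_or_eq_of_le (hfmaps ⟨le_rfl, zero_le_one⟩).1 with h | h
      · exact h
      · exact absurd (onto_of_fix hcf hfmaps h.symm hf1) hfnotonto
    have hg1 : g 1 < 1 := by
      rcases lt_or_eq_of_le (hgmaps ⟨zero_le_one, le_rfl⟩).2 with h | h
      · exact h
      · exact absurd (onto_of_fix hcg hgmaps hg0 h) hgnotonto
    obtain ⟨hAg, hAf⟩ := master hgM hfM hgmaps hfmaps hgmono hfmono hg0 hg1 hf1 hf0 hx₀ hnear'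
    exact ⟨1, 0, hAf, hAg, Set.pair_comm 1 0⟩
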